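/- arXiv:2508.13004 — 5 statements merged into one kernel-verified Lean document; each statement's English description precedes it below -/
import Mathlib

section
/- If 𝒯 is an antiunitary operator on a finite-dimensional complex Hilbert space with 𝒯∘𝒯 = -I, then the dimension of the space is even, and there exists an orthonormal basis whose vectors come in pairs φⱼ, ψⱼ with 𝒯(φⱼ) = -ψⱼ and 𝒯(ψⱼ) = φⱼ. -/
local notation "⟪" x ", " y "⟫" => @inner ℂ _ _ x y

/-!
Antiunitarity and `T ∘ T = -1` give `⟪T x, x⟫ = conj ⟪x, T x⟫ = ⟪T x, T (T x)⟫ = -⟪T x, x⟫`, so every unit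
vector `v` yields an orthonormal pair `(T v, v)` with `T (T v) = -v`. If `v` is orthogonal to a family
of such pairs, so is `T v`, because `T` preserves orthogonality and maps the family onto itself up
to sign. Hence an orthonormal family of pairs can be extended one pair at a time until it spans,
and then the dimension is twice the number of pairs.
-/

open Module

theorem orthonormal_finCons {𝕜 E : Type*} [RCLike 𝕜] [NormedAddCommGroup E] [InnerProductSpace 𝕜 E]
    {m : ℕ} {v : E} {g : Fin m → E} (hv : ‖v‖ = 1) (hvg : ∀ j, inner 𝕜 v (g j) = 0)
    (hg : Orthonormal 𝕜 g) : Orthonormal 𝕜 (Fin.cons v g : Fin (m + 1) → E) := by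
  refine ⟨Fin.cases hv hg.1, fun i j hij => ?_⟩
  induction i using Fin.cases <;> induction j using Fin.cases
  · exact absurd rfl hij
  · exact hvg _
  · rw [Fin.cons_succ, Fin.cons_zero, ← inner_conj_symm, hvg, map_zero]
  · exact hg.2 (ne_of_apply_ne _ hij)

theorem exists_norm_eq_one_forall_inner_eq_zero {𝕜 E ι : Type*} [RCLike 𝕜] [NormedAddCommGroup E]
    [InnerProductSpace 𝕜 E] [FiniteDimensional 𝕜 E] [Fintype ι] (f : ι → E)
    (hcard : Fintype.card ι < finrank 𝕜 E) : ∃ v : E, ‖v‖ = 1 ∧ ∀ i, inner 𝕜 (f i) v = 0 := by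
  have hspan : Submodule.span 𝕜 (Set.range f) ≠ ⊤ := fun h => by
    have := finrank_range_le_card (R := 𝕜) f
    rw [Set.finrank, h, finrank_top] at this
    omega
  obtain ⟨w, hw, hw0⟩ :=
    (Submodule.ne_bot_iff _).mp (mt Submodule.orthogonal_eq_bot_iff.mp hspan)
  refine ⟨(‖w‖⁻¹ : 𝕜) • w, norm_smul_inv_norm hw0, fun i => ?_⟩
  rw [inner_smul_right,
    Submodule.inner_right_of_mem_orthogonal (Submodule.subset_span (Set.mem_range_self i)) hw,
    mul_zero]

theorem Orthonormal.sumElim {𝕜 E ι κ : Type*} [RCLike 𝕜] [NormedAddCommGroup E]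
    [InnerProductSpace 𝕜 E] {a : ι → E} {b : κ → E} (ha : Orthonormal 𝕜 a)
    (hb : Orthonormal 𝕜 b) (hab : ∀ i j, inner 𝕜 (a i) (b j) = 0) :
    Orthonormal 𝕜 (Sum.elim a b) := by
  refine ⟨Sum.forall.mpr ⟨ha.1, hb.1⟩, ?_⟩
  rintro (i | i) (j | j) hij
  · exact ha.2 (ne_of_apply_ne _ hij)
  · exact hab i j
  · rw [Sum.elim_inr, Sum.elim_inl, ← inner_conj_symm, hab, map_zero]
  · exact hb.2 (ne_of_apply_ne _ hij)

section Antiunitary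

variable {E : Type*} [NormedAddCommGroup E] [InnerProductSpace ℂ E] {T : E → E}

theorem inner_apply_self_eq_zero (hinner : ∀ v w, ⟪T v, T w⟫ = starRingEnd ℂ ⟪v, w⟫)
    (hsq : ∀ v, T (T v) = -v) (x : E) : ⟪T x, x⟫ = 0 := by
  have h := hinner x (T x)
  rw [hsq, inner_neg_right, inner_conj_symm] at h
  linear_combination -h / 2

theorem Orthonormal.comp_antiunitary (hinner : ∀ v w, ⟪T v, T w⟫ = starRingEnd ℂ ⟪v, w⟫)
    {ι : Type*} {g : ι → E} (hg : Orthonormal ℂ g) : Orthonormal ℂ (T ∘ g) := by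
  classical
  rw [orthonormal_iff_ite] at hg ⊢
  intro i j
  rw [Function.comp_apply, Function.comp_apply, hinner, hg, apply_ite (starRingEnd ℂ), map_one,
    map_zero]

/-- The family `φⱼ = T ψⱼ`, `ψⱼ = g j`; the relation `T φⱼ = -ψⱼ` is then `T ∘ T = -1`. -/
def pairFamily {ι : Type*} (T : E → E) (g : ι → E) : ι ⊕ ι → E :=
  Sum.elim (T ∘ g) g

theorem orthonormal_pairFamily_iff (hinner : ∀ v w, ⟪T v, T w⟫ = starRingEnd ℂ ⟪v, w⟫)
    {ι : Type*} {g : ι → E} :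
    Orthonormal ℂ (pairFamily T g) ↔ Orthonormal ℂ g ∧ ∀ i j, ⟪T (g i), g j⟫ = 0 :=
  ⟨fun h => ⟨h.comp _ Sum.inr_injective, fun _ _ => h.2 Sum.inl_ne_inr⟩,
    fun ⟨hg, h⟩ => (hg.comp_antiunitary hinner).sumElim hg h⟩

theorem Orthonormal.pairFamily_finCons (hinner : ∀ v w, ⟪T v, T w⟫ = starRingEnd ℂ ⟪v, w⟫)
    (hsq : ∀ v, T (T v) = -v) {m : ℕ} {g : Fin m → E} (hg : Orthonormal ℂ (pairFamily T g))
    {v : E} (hv : ‖v‖ = 1) (hvg : ∀ i, ⟪pairFamily T g i, v⟫ = 0) :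
    Orthonormal ℂ (pairFamily T (Fin.cons v g : Fin (m + 1) → E)) := by
  rw [orthonormal_pairFamily_iff hinner] at hg ⊢
  have hTgv (j : Fin m) : ⟪T (g j), v⟫ = 0 := hvg (.inl j)
  have hgv (j : Fin m) : ⟪g j, v⟫ = 0 := hvg (.inr j)
  refine ⟨orthonormal_finCons hv (fun j => by rw [← inner_conj_symm, hgv, map_zero]) hg.1,
    fun i j => ?_⟩
  induction i using Fin.cases <;> induction j using Fin.cases
  · exact inner_apply_self_eq_zero hinner hsq v
  · rename_i j
    have hg_eq : g j = -T (T (g j)) := by rw [hsq, neg_neg]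
    rw [Fin.cons_zero, Fin.cons_succ, hg_eq, inner_neg_right, hinner, ← inner_conj_symm, hTgv,
      map_zero, map_zero, neg_zero]
  · exact hTgv _
  · exact hg.2 _ _

variable [FiniteDimensional ℂ E]

theorem exists_orthonormal_pairFamily_finrank_eq
    (hinner : ∀ v w, ⟪T v, T w⟫ = starRingEnd ℂ ⟪v, w⟫) (hsq : ∀ v, T (T v) = -v)
    {m : ℕ} (g : Fin m → E) (hg : Orthonormal ℂ (pairFamily T g)) :
    ∃ (n : ℕ) (g : Fin n → E), Orthonormal ℂ (pairFamily T g) ∧ finrank ℂ E = 2 * n := by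
  have hle : 2 * m ≤ finrank ℂ E := by
    simpa [two_mul] using hg.linearIndependent.fintype_card_le_finrank
  by_cases heq : finrank ℂ E = 2 * m
  · exact ⟨m, g, hg, heq⟩
  obtain ⟨v, hv, hvg⟩ := exists_norm_eq_one_forall_inner_eq_zero (𝕜 := ℂ) (pairFamily T g)
    (by simp only [Fintype.card_sum, Fintype.card_fin]; omega)
  exact exists_orthonormal_pairFamily_finrank_eq hinner hsq _
    (hg.pairFamily_finCons hinner hsq hv hvg)
termination_by finrank ℂ E - 2 * m
decreasing_by omega

end Antiunitary

theorem stmt_2_general {H : Type*} [NormedAddCommGroup H] [InnerProductSpace ℂ H]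
    [FiniteDimensional ℂ H] (T : H → H)
    (hinner : ∀ v w, ⟪T v, T w⟫ = starRingEnd ℂ ⟪v, w⟫)
    (hsq : ∀ v, T (T v) = -v) :
    ∃ m : ℕ, Module.finrank ℂ H = 2 * m ∧
      ∃ b : OrthonormalBasis (Fin m ⊕ Fin m) ℂ H,
        ∀ j : Fin m, T (b (Sum.inl j)) = -(b (Sum.inr j)) ∧
          T (b (Sum.inr j)) = b (Sum.inl j) := by
  obtain ⟨m, g, hg, hrank⟩ := exists_orthonormal_pairFamily_finrank_eq hinner hsq Fin.elim0
    (by simp [pairFamily])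
  have hcard : Fintype.card (Fin m ⊕ Fin m) = finrank ℂ H := by simp [hrank, two_mul]
  refine ⟨m, hrank, OrthonormalBasis.mk hg
    (hg.linearIndependent.span_eq_top_of_card_eq_finrank' hcard).ge, fun j => ?_⟩
  simp [pairFamily, hsq]

theorem stmt_2 {H : Type*} [NormedAddCommGroup H] [InnerProductSpace ℂ H]
    [FiniteDimensional ℂ H] (T : H → H)
    (hadd : ∀ v w, T (v + w) = T v + T w)
    (hsmul : ∀ (c : ℂ) v, T (c • v) = (starRingEnd ℂ c) • T v)
    (hsurj : Function.Surjective T)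
    (hinner : ∀ v w, ⟪T v, T w⟫ = starRingEnd ℂ ⟪v, w⟫)
    (hsq : ∀ v, T (T v) = -v) :
    ∃ m : ℕ, Module.finrank ℂ H = 2 * m ∧
      ∃ b : OrthonormalBasis (Fin m ⊕ Fin m) ℂ H,
        ∀ j : Fin m, T (b (Sum.inl j)) = -(b (Sum.inr j)) ∧
          T (b (Sum.inr j)) = b (Sum.inl j) :=
  stmt_2_general T hinner hsq
end

section
/- Suppose 𝒯 is antiunitary with 𝒯∘𝒯 = -I, Π is unitary with Π² = I, and 𝒯∘Π = -Π∘𝒯, all on a finite-dimensional complex Hilbert space. Then the +1 and -1 eigenspaces of Π have equal dimension (Π is balanced). -/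
local notation "⟪" x ", " y "⟫" => @inner ℂ _ _ x y

theorem stmt_15 {H : Type*} [NormedAddCommGroup H] [InnerProductSpace ℂ H]
    [FiniteDimensional ℂ H] (T : H → H)
    (hadd : ∀ v w, T (v + w) = T v + T w)
    (hsmul : ∀ (c : ℂ) v, T (c • v) = (starRingEnd ℂ c) • T v)
    (hsurj : Function.Surjective T)
    (hinner : ∀ v w, ⟪T v, T w⟫ = starRingEnd ℂ ⟪v, w⟫)
    (hsq : ∀ v, T (T v) = -v)
    (P : H ≃ₗᵢ[ℂ] H) (hP2 : ∀ v, P (P v) = v)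
    (hanti : ∀ v, T (P v) = -P (T v)) :
    Module.finrank ℂ (Module.End.eigenspace (P.toLinearEquiv.toLinearMap) 1) =
      Module.finrank ℂ (Module.End.eigenspace (P.toLinearEquiv.toLinearMap) (-1)) := by
  set E1 := Module.End.eigenspace (P.toLinearEquiv.toLinearMap) 1 with hE1
  set E2 := Module.End.eigenspace (P.toLinearEquiv.toLinearMap) (-1) with hE2
  have hmem1 : ∀ v : H, v ∈ E1 ↔ P v = v := by
    intro v; rw [hE1, Module.End.mem_eigenspace_iff]; simp
  have hmem2 : ∀ v : H, v ∈ E2 ↔ P v = -v := by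
    intro v; rw [hE2, Module.End.mem_eigenspace_iff]; simp
  have hrsmul : ∀ (r : ℝ) (v : H), T (r • v) = r • T v := by
    intro r v
    have h : (r : ℂ) • v = r • v := by simp [Complex.coe_smul]
    rw [← h, hsmul]
    simp [Complex.coe_smul]
  have hTinj : Function.Injective T := by
    intro a b hab
    have := hsq a
    rw [hab, hsq] at this
    exact neg_injective this.symm
  -- T maps E1 into E2
  have hT12 : ∀ v : H, v ∈ E1 → T v ∈ E2 := by
    intro v hv
    rw [hmem1] at hv
    rw [hmem2]
    have h := hanti v
    rw [hv] at h
    exact neg_eq_iff_eq_neg.mp h.symm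
  -- T maps E2 into E1
  have hT21 : ∀ v : H, v ∈ E2 → T v ∈ E1 := by
    intro v hv
    rw [hmem2] at hv
    rw [hmem1]
    have h := hanti v
    rw [hv] at h
    have h2 : T (-v) = -T v := by simpa using hrsmul (-1) v
    rw [h2] at h
    have := neg_injective h
    exact this.symm
  -- surjectivity E1 → E2 : if w ∈ E2 then w = T (-(T w)) with -(T w) ∈ E1
  have hTneg : ∀ v : H, T (-v) = -T v := by
    intro v; simpa using hrsmul (-1) v
  -- build ℝ-linear map
  let f : E1 →ₗ[ℝ] E2 :=
    { toFun := fun v => ⟨T v, hT12 v v.2⟩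
      map_add' := by intro a b; ext; simp [hadd]
      map_smul' := by intro r a; ext; simp [hrsmul] }
  have hfbij : Function.Bijective f := by
    constructor
    · intro a b hab
      have : T (a : H) = T (b : H) := congrArg Subtype.val hab
      exact Subtype.ext (hTinj this)
    · intro w
      have hw1 : -(T (w : H)) ∈ E1 := E1.neg_mem (hT21 _ w.2)
      refine ⟨⟨-(T (w : H)), hw1⟩, ?_⟩
      ext
      simp only [f, LinearMap.coe_mk, AddHom.coe_mk]
      rw [hTneg, hsq]
      simp
  let e : E1 ≃ₗ[ℝ] E2 := LinearEquiv.ofBijective f hfbij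
  have hreq : Module.finrank ℝ E1 = Module.finrank ℝ E2 := e.finrank_eq
  have h1 : Module.finrank ℝ ℂ * Module.finrank ℂ E1 = Module.finrank ℝ E1 :=
    Module.finrank_mul_finrank ℝ ℂ E1
  have h2 : Module.finrank ℝ ℂ * Module.finrank ℂ E2 = Module.finrank ℝ E2 :=
    Module.finrank_mul_finrank ℝ ℂ E2
  have hc : Module.finrank ℝ ℂ = 2 := Complex.finrank_real_complex
  rw [hc] at h1 h2
  omega
end

section
/- Suppose 𝒯 is antiunitary with 𝒯∘𝒯 = +I, Π is unitary with Π² = I and Π∘𝒯 = 𝒯∘Π, on a finite-dimensional complex Hilbert space of dimension n. Then there exist m ≤ n and an orthonormal basis ψ₁, …, ψₙ with 𝒯(ψⱼ) = ψⱼ for all j, Πψⱼ = ψⱼ for j ≤ m, and Πψⱼ = -ψⱼ for j > m. -/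
local notation "⟪" x ", " y "⟫" => @inner ℂ _ _ x y

theorem stmt_16 {H : Type*} [NormedAddCommGroup H] [InnerProductSpace ℂ H]
    [FiniteDimensional ℂ H] (T : H → H)
    (hadd : ∀ v w, T (v + w) = T v + T w)
    (hsmul : ∀ (c : ℂ) v, T (c • v) = (starRingEnd ℂ c) • T v)
    (hsurj : Function.Surjective T)
    (hinner : ∀ v w, ⟪T v, T w⟫ = starRingEnd ℂ ⟪v, w⟫)
    (hsq : ∀ v, T (T v) = v)
    (P : H ≃ₗᵢ[ℂ] H) (hP2 : ∀ v, P (P v) = v)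
    (hcomm : ∀ v, T (P v) = P (T v)) :
    ∃ m : ℕ, m ≤ Module.finrank ℂ H ∧
      ∃ b : OrthonormalBasis (Fin (Module.finrank ℂ H)) ℂ H,
        (∀ j, T (b j) = b j) ∧
        (∀ j : Fin (Module.finrank ℂ H),
          ((j : ℕ) < m → P (b j) = b j) ∧ (m ≤ (j : ℕ) → P (b j) = -b j)) := by
  classical
  have hT0 : T 0 = 0 := by
    have h := hadd 0 0
    simp only [add_zero] at h
    exact (left_eq_add.mp h)
  have hsub : ∀ v w, T (v - w) = T v - T w := by
    intro v w
    have : T (-w) = -T w := by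
      have := hsmul (-1) w
      simpa using this
    rw [sub_eq_add_neg, hadd, this, sub_eq_add_neg]
  letI : InnerProductSpace ℝ H := InnerProductSpace.rclikeToReal ℂ H
  haveI : FiniteDimensional ℝ H := Module.Finite.trans ℂ H
  have hTr : ∀ (r : ℝ) (v : H), T (r • v) = r • T v := by
    intro r v
    rw [show r • v = ((r : ℂ) • v) from (Complex.coe_smul r v).symm, hsmul,
      Complex.conj_ofReal, Complex.coe_smul]
  let Vp : Submodule ℝ H :=
    { carrier := {v | T v = v ∧ P v = v}
      add_mem' := fun ha hb => ⟨by rw [hadd, ha.1, hb.1], by rw [map_add, ha.2, hb.2]⟩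
      zero_mem' := ⟨hT0, map_zero P⟩
      smul_mem' := fun r v hv => ⟨by rw [hTr, hv.1], by
        rw [show r • v = ((r : ℂ) • v) from (Complex.coe_smul r v).symm, map_smul, hv.2]⟩ }
  let Vm : Submodule ℝ H :=
    { carrier := {v | T v = v ∧ P v = -v}
      add_mem' := fun ha hb => ⟨by rw [hadd, ha.1, hb.1], by rw [map_add, ha.2, hb.2, neg_add]⟩
      zero_mem' := ⟨hT0, by rw [map_zero, neg_zero]⟩
      smul_mem' := fun r v hv => ⟨by rw [hTr, hv.1], by
        rw [show r • v = ((r : ℂ) • v) from (Complex.coe_smul r v).symm, map_smul, hv.2,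
          smul_neg]⟩ }
  have hVp_mem : ∀ {x : H}, x ∈ Vp → T x = x ∧ P x = x := fun h => h
  have hVm_mem : ∀ {x : H}, x ∈ Vm → T x = x ∧ P x = -x := fun h => h
  set mp := Module.finrank ℝ Vp with hmp
  set mm := Module.finrank ℝ Vm with hmm
  let bp := stdOrthonormalBasis ℝ Vp
  let bm := stdOrthonormalBasis ℝ Vm
  let f : Fin mp ⊕ Fin mm → H := Sum.elim (fun i => ((bp i : H))) (fun i => ((bm i : H)))
  have hfT : ∀ s, T (f s) = f s := by
    rintro (i | i)
    · exact (hVp_mem (bp i).2).1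
    · exact (hVm_mem (bm i).2).1
  have hreal : ∀ x y : H, T x = x → T y = y → ⟪x, y⟫ = ((⟪x, y⟫.re : ℝ) : ℂ) := by
    intro x y hx hy
    have h := hinner x y
    rw [hx, hy] at h
    exact (Complex.conj_eq_iff_re.mp h.symm).symm
  have hcross : ∀ x y : H, P x = x → P y = -y → ⟪x, y⟫ = 0 := by
    intro x y hx hy
    have h := P.inner_map_map x y
    rw [hx, hy, inner_neg_right] at h
    linear_combination (-(1 : ℂ) / 2) * h
  have hon : Orthonormal ℂ f := by
    rw [orthonormal_iff_ite]
    have hbp := bp.orthonormal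
    have hbm := bm.orthonormal
    rw [orthonormal_iff_ite] at hbp hbm
    rintro (i | i) (j | j)
    · have h2 := hbp i j
      have h3 : (⟪(bp i : H), (bp j : H)⟫.re : ℝ) = if i = j then 1 else 0 := h2
      have hgoal : ⟪(bp i : H), (bp j : H)⟫
          = if (Sum.inl i : Fin mp ⊕ Fin mm) = Sum.inl j then (1 : ℂ) else 0 := by
        rw [hreal _ _ (hVp_mem (bp i).2).1 (hVp_mem (bp j).2).1, h3]
        simp [Sum.inl.injEq, apply_ite ((↑·) : ℝ → ℂ)]
      exact hgoal
    · show ⟪(bp i : H), (bm j : H)⟫ = _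
      rw [hcross _ _ (hVp_mem (bp i).2).2 (hVm_mem (bm j).2).2]
      simp
    · show ⟪(bm i : H), (bp j : H)⟫ = _
      rw [inner_eq_zero_symm.mpr (hcross _ _ (hVp_mem (bp j).2).2 (hVm_mem (bm i).2).2)]
      simp
    · have h2 := hbm i j
      have h3 : (⟪(bm i : H), (bm j : H)⟫.re : ℝ) = if i = j then 1 else 0 := h2
      have hgoal : ⟪(bm i : H), (bm j : H)⟫
          = if (Sum.inr i : Fin mp ⊕ Fin mm) = Sum.inr j then (1 : ℂ) else 0 := by
        rw [hreal _ _ (hVm_mem (bm i).2).1 (hVm_mem (bm j).2).1, h3]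
        simp [Sum.inr.injEq, apply_ite ((↑·) : ℝ → ℂ)]
      exact hgoal
  set S := Submodule.span ℂ (Set.range f) with hS
  have hsubspan : ∀ (V : Submodule ℝ H) (g : OrthonormalBasis (Fin (Module.finrank ℝ V)) ℝ V),
      (∀ i, ((g i : H)) ∈ Set.range f) → ∀ x : H, x ∈ V → x ∈ S := by
    intro V g hg x hx
    have h1 : x ∈ Submodule.map V.subtype ⊤ := ⟨⟨x, hx⟩, trivial, rfl⟩
    rw [← g.toBasis.span_eq, Submodule.map_span] at h1
    have h2 := Submodule.span_le_restrictScalars ℝ ℂ (V.subtype '' Set.range ⇑g.toBasis) h1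
    rw [Submodule.restrictScalars_mem] at h2
    refine Submodule.span_mono ?_ h2
    rintro _ ⟨_, ⟨i, rfl⟩, rfl⟩
    rw [g.coe_toBasis]
    exact hg i
  have hmemP : ∀ x : H, T x = x → P x = x → x ∈ S := by
    intro x h1 h2
    exact hsubspan Vp bp (fun i => ⟨Sum.inl i, rfl⟩) x ⟨h1, h2⟩
  have hmemM : ∀ x : H, T x = x → P x = -x → x ∈ S := by
    intro x h1 h2
    exact hsubspan Vm bm (fun i => ⟨Sum.inr i, rfl⟩) x ⟨h1, h2⟩
  have hc2 : (starRingEnd ℂ) (2⁻¹ : ℂ) = 2⁻¹ := by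
    rw [map_inv₀, Complex.conj_ofNat]
  have hcI : (starRingEnd ℂ) (-(2⁻¹) * Complex.I) = -(-(2⁻¹) * Complex.I) := by
    rw [map_mul, map_neg, map_inv₀, Complex.conj_I, Complex.conj_ofNat]
    ring
  -- every P-eigenvector is in the span
  have keyP : ∀ u : H, P u = u → u ∈ S := by
    intro u hu
    set a1 := (2⁻¹ : ℂ) • (u + T u) with ha1
    set a2 := (-(2⁻¹) * Complex.I) • (u - T u) with ha2
    have hT1 : T a1 = a1 := by
      rw [ha1, hsmul, hadd, hsq, hc2, add_comm]
    have hT2 : T a2 = a2 := by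
      rw [ha2, hsmul, hsub, hsq, hcI, neg_smul, ← smul_neg, neg_sub]
    have hPTu : P (T u) = T u := by rw [← hcomm, hu]
    have hP1 : P a1 = a1 := by rw [ha1, map_smul, map_add, hu, hPTu]
    have hP2' : P a2 = a2 := by rw [ha2, map_smul, map_sub, hu, hPTu]
    have hdecomp : u = a1 + Complex.I • a2 := by
      rw [ha1, ha2, smul_smul]
      have hIc : Complex.I * (-(2⁻¹) * Complex.I) = 2⁻¹ := by
        linear_combination (-(2⁻¹) : ℂ) * Complex.I_mul_I
      rw [hIc]
      module
    rw [hdecomp]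
    exact S.add_mem (hmemP _ hT1 hP1) (S.smul_mem _ (hmemP _ hT2 hP2'))
  have keyM : ∀ u : H, P u = -u → u ∈ S := by
    intro u hu
    set a1 := (2⁻¹ : ℂ) • (u + T u) with ha1
    set a2 := (-(2⁻¹) * Complex.I) • (u - T u) with ha2
    have hT1 : T a1 = a1 := by
      rw [ha1, hsmul, hadd, hsq, hc2, add_comm]
    have hT2 : T a2 = a2 := by
      rw [ha2, hsmul, hsub, hsq, hcI, neg_smul, ← smul_neg, neg_sub]
    have hPTu : P (T u) = -(T u) := by
      rw [← hcomm, hu]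
      have := hsmul (-1) u
      simpa using this
    have hP1 : P a1 = -a1 := by
      rw [ha1, map_smul, map_add, hu, hPTu, ← neg_add, smul_neg]
    have hP2' : P a2 = -a2 := by
      rw [ha2, map_smul, map_sub, hu, hPTu, sub_neg_eq_add, ← smul_neg, neg_sub']
      rw [sub_neg_eq_add, add_comm]
    have hdecomp : u = a1 + Complex.I • a2 := by
      rw [ha1, ha2, smul_smul]
      have hIc : Complex.I * (-(2⁻¹) * Complex.I) = 2⁻¹ := by
        linear_combination (-(2⁻¹) : ℂ) * Complex.I_mul_I
      rw [hIc]
      module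
    rw [hdecomp]
    exact S.add_mem (hmemM _ hT1 hP1) (S.smul_mem _ (hmemM _ hT2 hP2'))
  have hsp : ⊤ ≤ S := by
    intro v _
    have hvp : P ((2⁻¹ : ℂ) • (v + P v)) = (2⁻¹ : ℂ) • (v + P v) := by
      rw [map_smul, map_add, hP2, add_comm]
    have hvm : P ((2⁻¹ : ℂ) • (v - P v)) = -((2⁻¹ : ℂ) • (v - P v)) := by
      rw [map_smul, map_sub, hP2, ← smul_neg, neg_sub]
    have hv : v = (2⁻¹ : ℂ) • (v + P v) + (2⁻¹ : ℂ) • (v - P v) := by module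
    rw [hv]
    exact S.add_mem (keyP _ hvp) (keyM _ hvm)
  let b0 : OrthonormalBasis (Fin mp ⊕ Fin mm) ℂ H := OrthonormalBasis.mk hon hsp
  have hb0 : ∀ s, b0 s = f s := fun s => by
    rw [show b0 = OrthonormalBasis.mk hon hsp from rfl, OrthonormalBasis.coe_mk]
  have hcard : Module.finrank ℂ H = mp + mm := by
    rw [Module.finrank_eq_card_basis b0.toBasis]
    simp
  let e : (Fin mp ⊕ Fin mm) ≃ Fin (Module.finrank ℂ H) :=
    finSumFinEquiv.trans (finCongr hcard.symm)
  have he_l : ∀ i : Fin mp, ((e (Sum.inl i) : ℕ)) = (i : ℕ) := by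
    intro i; simp [e, finSumFinEquiv_apply_left]
  have he_r : ∀ i : Fin mm, ((e (Sum.inr i) : ℕ)) = mp + (i : ℕ) := by
    intro i; simp [e, finSumFinEquiv_apply_right]
  let b := b0.reindex e
  refine ⟨mp, by omega, b, ?_, ?_⟩
  · intro j
    rw [show b = b0.reindex e from rfl, OrthonormalBasis.reindex_apply, hb0]
    exact hfT _
  · intro j
    rw [show b = b0.reindex e from rfl, OrthonormalBasis.reindex_apply, hb0]
    constructor
    · intro hj
      rcases hs : e.symm j with i | i
      · exact (hVp_mem (bp i).2).2
      · exfalso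
        have hj2 : j = e (Sum.inr i) := by rw [← hs, Equiv.apply_symm_apply]
        have := he_r i
        rw [← hj2] at this
        omega
    · intro hj
      rcases hs : e.symm j with i | i
      · exfalso
        have hj2 : j = e (Sum.inl i) := by rw [← hs, Equiv.apply_symm_apply]
        have := he_l i
        rw [← hj2] at this
        have hi := i.2
        omega
      · exact (hVm_mem (bm i).2).2
end

section
/- Suppose 𝒯 is antiunitary with 𝒯∘𝒯 = -I, Π is unitary with Π² = I and Π∘𝒯 = 𝒯∘Π, on a finite-dimensional complex Hilbert space. Then there exist m and an orthonormal basis consisting of pairs φⱼ, ψⱼ with 𝒯(φⱼ) = -ψⱼ, 𝒯(ψⱼ) = φⱼ, and with Πφⱼ = φⱼ and Πψⱼ = ψⱼ for j ≤ m, while Πφⱼ = -φⱼ and Πψⱼ = -ψⱼ for j > m. -/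
local notation "⟪" x ", " y "⟫" => @inner ℂ _ _ x y

open Module Submodule

section helpers
variable {E : Type*} [NormedAddCommGroup E] [InnerProductSpace ℂ E]

lemma Tneg (T : E → E) (hsmul : ∀ (c : ℂ) v, T (c • v) = (starRingEnd ℂ c) • T v)
    (v : E) : T (-v) = -T v := by
  have := hsmul (-1) v
  simpa using this

lemma Tnorm (T : E → E) (hinner : ∀ v w, ⟪T v, T w⟫ = starRingEnd ℂ ⟪v, w⟫)
    (v : E) : ‖T v‖ = ‖v‖ := by
  have h := hinner v v
  rw [inner_self_eq_norm_sq_to_K, inner_self_eq_norm_sq_to_K, map_pow,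
    RCLike.conj_ofReal] at h
  have h2 : (‖T v‖ : ℝ) ^ 2 = ‖v‖ ^ 2 := by exact_mod_cast h
  nlinarith [norm_nonneg (T v), norm_nonneg v]

lemma Tperp (T : E → E) (hinner : ∀ v w, ⟪T v, T w⟫ = starRingEnd ℂ ⟪v, w⟫)
    (hsq : ∀ v, T (T v) = -v) (v : E) : ⟪T v, v⟫ = 0 := by
  have h := hinner v (T v)
  rw [hsq v, inner_neg_right, ← inner_conj_symm v (T v)] at h
  -- h : -⟪T v, v⟫ = conj (conj ⟪T v, v⟫)
  rw [starRingEnd_self_apply] at h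
  linear_combination -h / 2
end helpers

lemma kramers_core (N : ℕ) : ∀ {E : Type u_1} [inst : NormedAddCommGroup E]
    [inst2 : InnerProductSpace ℂ E] [inst3 : FiniteDimensional ℂ E] (T : E → E),
    Module.finrank ℂ E = N →
    (∀ v w, T (v + w) = T v + T w) →
    (∀ (c : ℂ) v, T (c • v) = (starRingEnd ℂ c) • T v) →
    (∀ v w, ⟪T v, T w⟫ = starRingEnd ℂ ⟪v, w⟫) →
    (∀ v, T (T v) = -v) →
    ∃ n, N = 2 * n ∧ ∃ b : OrthonormalBasis (Fin n ⊕ Fin n) ℂ E,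
      ∀ j, T (b (Sum.inl j)) = -(b (Sum.inr j)) ∧ T (b (Sum.inr j)) = b (Sum.inl j) := by
  induction N using Nat.strong_induction_on with
  | _ N IH =>
  intro E _ _ _ T hrank hadd hsmul hinner hsq
  rcases Nat.eq_zero_or_pos N with hN | hN
  · subst hN
    refine ⟨0, by ring, ?_⟩
    have hsub : Subsingleton E := by
      rw [← finrank_zero_iff (R := ℂ)]; omega
    have hon : Orthonormal ℂ (fun i : (Fin 0 ⊕ Fin 0) => (0 : E)) := by
      constructor
      · intro i; exact i.elim (fun x => x.elim0) (fun x => x.elim0)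
      · intro i; exact i.elim (fun x => x.elim0) (fun x => x.elim0)
    refine ⟨OrthonormalBasis.mk hon ?_, fun j => j.elim0⟩
    · intro v _
      have : v = 0 := Subsingleton.elim v 0
      simp [this]
  · -- positive dimension: pick a unit vector
    have hnt : Nontrivial E := by
      have : 0 < finrank ℂ E := by omega
      exact Module.nontrivial_of_finrank_pos this
    obtain ⟨v0, hv0⟩ := exists_ne (0 : E)
    set φ := (‖v0‖ : ℂ)⁻¹ • v0 with hφdef
    have hφ : ‖φ‖ = 1 := by
      have h0 : ‖v0‖ ≠ 0 := norm_ne_zero_iff.2 hv0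
      rw [hφdef, norm_smul]
      simp [h0]
    set ψ := -T φ with hψdef
    have hTφ : T φ = -ψ := by rw [hψdef, neg_neg]
    have hTψ : T ψ = φ := by rw [hψdef, Tneg T hsmul, hsq, neg_neg]
    have hψn : ‖ψ‖ = 1 := by rw [hψdef, norm_neg, Tnorm T hinner, hφ]
    have hφψ : ⟪φ, ψ⟫ = 0 := by
      rw [hψdef, inner_neg_right, neg_eq_zero, ← inner_conj_symm,
        Tperp T hinner hsq, map_zero]
    have hψφ : ⟪ψ, φ⟫ = 0 := by rw [← inner_conj_symm, hφψ, map_zero]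
    set S : Submodule ℂ E := Submodule.span ℂ {φ, ψ} with hS
    have hφS : φ ∈ S := Submodule.subset_span (by simp)
    have hψS : ψ ∈ S := Submodule.subset_span (by simp)
    have hperp : ∀ v : E, ⟪φ, v⟫ = 0 → ⟪ψ, v⟫ = 0 → v ∈ Sᗮ := by
      intro v h1 h2
      rw [Submodule.mem_orthogonal]
      intro u hu
      induction hu using Submodule.span_induction with
      | mem x hx => rcases hx with rfl | rfl <;> assumption
      | zero => simp
      | add x y _ _ hx hy => rw [inner_add_left, hx, hy, add_zero]
      | smul c x _ hx => rw [inner_smul_left, hx, mul_zero]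
    have hTS : ∀ v ∈ Sᗮ, T v ∈ Sᗮ := by
      intro v hv
      have e1 : ⟪ψ, v⟫ = 0 := (Submodule.mem_orthogonal _ _).1 hv ψ hψS
      have e2 : ⟪φ, v⟫ = 0 := (Submodule.mem_orthogonal _ _).1 hv φ hφS
      apply hperp
      · rw [← hTψ, hinner, e1, map_zero]
      · rw [hψdef, inner_neg_left, hinner, e2, map_zero, neg_zero]
    have honS : Orthonormal ℂ ![φ, ψ] := by
      rw [orthonormal_iff_ite]
      intro i j
      fin_cases i <;> fin_cases j <;>
        simp [inner_self_eq_norm_sq_to_K, hφ, hψn, hφψ, hψφ]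
    have hrange : Set.range ![φ, ψ] = {φ, ψ} := by
      ext x
      simp [Fin.exists_fin_two]
      tauto
    have hSrank : finrank ℂ S = 2 := by
      rw [hS, ← hrange, finrank_span_eq_card honS.linearIndependent]
      simp
    have hsum := Submodule.finrank_add_finrank_orthogonal S
    rw [hSrank, hrank] at hsum
    have hN2 : 2 ≤ N := by omega
    set T' : Sᗮ → Sᗮ := fun v => ⟨T v, hTS v v.2⟩ with hT'
    obtain ⟨n', hn', b', hb'⟩ := IH (N - 2) (by omega) T' (by omega)
      (fun v w => Subtype.ext (hadd v w))
      (fun c v => Subtype.ext (hsmul c v))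
      (fun v w => by
        rw [Submodule.coe_inner, Submodule.coe_inner]
        exact hinner v w)
      (fun v => Subtype.ext (hsq v))
    refine ⟨n' + 1, by omega, ?_⟩
    set e : Fin (n' + 1) ⊕ Fin (n' + 1) → E :=
      Sum.elim (Fin.cases φ (fun i => (b' (Sum.inl i) : E)))
               (Fin.cases ψ (fun i => (b' (Sum.inr i) : E))) with he
    have c1 : ∀ x, ⟪φ, ((b' x : E))⟫ = 0 :=
      fun x => (Submodule.mem_orthogonal _ _).1 (b' x).2 φ hφS
    have c2 : ∀ x, ⟪ψ, ((b' x : E))⟫ = 0 :=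
      fun x => (Submodule.mem_orthogonal _ _).1 (b' x).2 ψ hψS
    have c1' : ∀ x, ⟪((b' x : E)), φ⟫ = 0 :=
      fun x => by rw [← inner_conj_symm, c1, map_zero]
    have c2' : ∀ x, ⟪((b' x : E)), ψ⟫ = 0 :=
      fun x => by rw [← inner_conj_symm, c2, map_zero]
    have hb'ite : ∀ x y, ⟪(b' x : E), (b' y : E)⟫ = if x = y then 1 else 0 :=
      fun x y => by
        rw [← Submodule.coe_inner]
        exact orthonormal_iff_ite.1 b'.orthonormal x y
    have hone : Orthonormal ℂ e := by
      rw [orthonormal_iff_ite]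
      rintro (i | i) (j | j) <;>
        induction i using Fin.cases <;> induction j using Fin.cases <;>
          simp [he, inner_self_eq_norm_sq_to_K, hφ, hψn, hφψ, hψφ, c1, c2, c1', c2',
            hb'ite, Fin.succ_inj, (Fin.succ_ne_zero _), (Fin.succ_ne_zero _).symm]
    have hcard : Fintype.card (Fin (n' + 1) ⊕ Fin (n' + 1)) = finrank ℂ E := by
      simp [hrank]
      omega
    have hNe : Nonempty (Fin (n' + 1) ⊕ Fin (n' + 1)) := ⟨Sum.inl 0⟩
    have hspan : ⊤ ≤ Submodule.span ℂ (Set.range e) := by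
      have hb := (basisOfLinearIndependentOfCardEqFinrank hone.linearIndependent hcard).span_eq
      rw [coe_basisOfLinearIndependentOfCardEqFinrank] at hb
      rw [hb]
    refine ⟨OrthonormalBasis.mk hone hspan, ?_⟩
    intro j
    rw [OrthonormalBasis.coe_mk]
    induction j using Fin.cases with
    | zero =>
      constructor
      · simpa [he] using hTφ
      · simpa [he] using hTψ
    | succ i =>
      have r1 := congrArg Subtype.val (hb' i).1
      have r2 := congrArg Subtype.val (hb' i).2
      constructor
      · simpa [he] using r1
      · simp [he]; exact r2
theorem stmt_17 {H : Type*} [NormedAddCommGroup H] [InnerProductSpace ℂ H]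
    [FiniteDimensional ℂ H] (T : H → H)
    (hadd : ∀ v w, T (v + w) = T v + T w)
    (hsmul : ∀ (c : ℂ) v, T (c • v) = (starRingEnd ℂ c) • T v)
    (hsurj : Function.Surjective T)
    (hinner : ∀ v w, ⟪T v, T w⟫ = starRingEnd ℂ ⟪v, w⟫)
    (hsq : ∀ v, T (T v) = -v)
    (P : H ≃ₗᵢ[ℂ] H) (hP2 : ∀ v, P (P v) = v)
    (hcomm : ∀ v, T (P v) = P (T v)) :
    ∃ k m : ℕ, m ≤ k ∧ Module.finrank ℂ H = 2 * k ∧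
      ∃ b : OrthonormalBasis (Fin k ⊕ Fin k) ℂ H,
        ∀ j : Fin k,
          T (b (Sum.inl j)) = -(b (Sum.inr j)) ∧
          T (b (Sum.inr j)) = b (Sum.inl j) ∧
          ((j : ℕ) < m → P (b (Sum.inl j)) = b (Sum.inl j) ∧
            P (b (Sum.inr j)) = b (Sum.inr j)) ∧
          (m ≤ (j : ℕ) → P (b (Sum.inl j)) = -(b (Sum.inl j)) ∧
            P (b (Sum.inr j)) = -(b (Sum.inr j))) := by
  classical
  set Pl : H →ₗ[ℂ] H := P.toLinearEquiv.toLinearMap with hPl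
  set Hp := LinearMap.ker (Pl - LinearMap.id) with hHp
  set Hm := LinearMap.ker (Pl + LinearMap.id) with hHm
  have hmemp : ∀ v : H, v ∈ Hp ↔ P v = v := by
    intro v
    simp [hHp, hPl, LinearMap.mem_ker, sub_eq_zero]
  have hmemm : ∀ v : H, v ∈ Hm ↔ P v = -v := by
    intro v
    simp [hHm, hPl, LinearMap.mem_ker, add_eq_zero_iff_eq_neg]
  have horth : ∀ u ∈ Hp, ∀ v ∈ Hm, ⟪u, v⟫ = 0 := by
    intro u hu v hv
    have h := P.inner_map_map u v
    rw [(hmemp u).1 hu, (hmemm v).1 hv, inner_neg_right] at h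
    linear_combination -h / 2
  have hmorth : Hpᗮ = Hm := by
    apply le_antisymm
    · intro v hv
      set a := (2⁻¹ : ℂ) • (v + P v) with hadef
      set bb := (2⁻¹ : ℂ) • (v - P v) with hbdef
      have ha : a ∈ Hp := by
        rw [hmemp, hadef, map_smul, map_add, hP2]
        module
      have hb : bb ∈ Hm := by
        rw [hmemm, hbdef, map_smul, map_sub, hP2]
        module
      have hab : a + bb = v := by
        rw [hadef, hbdef]
        match_scalars <;> norm_num
      have h1 : ⟪a, v⟫ = 0 := (Submodule.mem_orthogonal _ _).1 hv a ha
      have h2 : ⟪a, bb⟫ = 0 := horth a ha bb hb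
      have h3 : ⟪a, a⟫ = 0 := by
        have : ⟪a, a + bb⟫ = ⟪a, a⟫ + ⟪a, bb⟫ := inner_add_right a a bb
        rw [hab, h1, h2, add_zero] at this
        exact this.symm
      have ha0 : a = 0 := inner_self_eq_zero.1 h3
      rw [← hab, ha0, zero_add]
      exact hb
    · intro v hv
      rw [Submodule.mem_orthogonal]
      intro u hu
      exact horth u hu v hv
  have hTp : ∀ v ∈ Hp, T v ∈ Hp := by
    intro v hv
    rw [hmemp] at hv ⊢
    rw [← hcomm, hv]
  have hTm : ∀ v ∈ Hm, T v ∈ Hm := by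
    intro v hv
    rw [hmemm] at hv ⊢
    rw [← hcomm, hv, Tneg T hsmul]
  set Tp : Hp → Hp := fun v => ⟨T v, hTp v v.2⟩ with hTpdef
  set Tm : Hm → Hm := fun v => ⟨T v, hTm v v.2⟩ with hTmdef
  obtain ⟨m, hm, bp, hbp⟩ := kramers_core (Module.finrank ℂ Hp) Tp rfl
    (fun v w => Subtype.ext (hadd v w))
    (fun c v => Subtype.ext (hsmul c v))
    (fun v w => by
      rw [Submodule.coe_inner, Submodule.coe_inner]
      exact hinner v w)
    (fun v => Subtype.ext (hsq v))
  obtain ⟨m2, hm2, bm, hbm⟩ := kramers_core (Module.finrank ℂ Hm) Tm rfl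
    (fun v w => Subtype.ext (hadd v w))
    (fun c v => Subtype.ext (hsmul c v))
    (fun v w => by
      rw [Submodule.coe_inner, Submodule.coe_inner]
      exact hinner v w)
    (fun v => Subtype.ext (hsq v))
  have hdim : Module.finrank ℂ H = 2 * (m + m2) := by
    have := Submodule.finrank_add_finrank_orthogonal Hp
    rw [hmorth] at this
    omega
  refine ⟨m + m2, m, by omega, hdim, ?_⟩
  set e : ((Fin m ⊕ Fin m) ⊕ (Fin m2 ⊕ Fin m2)) → H :=
    Sum.elim (fun x => (bp x : H)) (fun y => (bm y : H)) with he
  have hbpite : ∀ x y, ⟪(bp x : H), (bp y : H)⟫ = if x = y then 1 else 0 :=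
    fun x y => by
      rw [← Submodule.coe_inner]
      exact orthonormal_iff_ite.1 bp.orthonormal x y
  have hbmite : ∀ x y, ⟪(bm x : H), (bm y : H)⟫ = if x = y then 1 else 0 :=
    fun x y => by
      rw [← Submodule.coe_inner]
      exact orthonormal_iff_ite.1 bm.orthonormal x y
  have hcr : ∀ x y, ⟪(bp x : H), (bm y : H)⟫ = 0 :=
    fun x y => horth _ (bp x).2 _ (bm y).2
  have hcr' : ∀ x y, ⟪(bm x : H), (bp y : H)⟫ = 0 :=
    fun x y => by rw [← inner_conj_symm, hcr, map_zero]
  have hone : Orthonormal ℂ e := by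
    rw [orthonormal_iff_ite]
    rintro (x | x) (y | y) <;> simp [he, hbpite, hbmite, hcr, hcr']
  have hcard : Fintype.card ((Fin m ⊕ Fin m) ⊕ (Fin m2 ⊕ Fin m2)) = Module.finrank ℂ H := by
    simp [hdim]
    omega
  have hspan : ⊤ ≤ Submodule.span ℂ (Set.range e) := by
    rcases Nat.eq_zero_or_pos (m + m2) with h0 | h0
    · intro v _
      have hsub : Subsingleton H := by
        rw [← finrank_zero_iff (R := ℂ)]
        omega
      have : v = 0 := Subsingleton.elim v 0
      simp [this]
    · have hNe : Nonempty ((Fin m ⊕ Fin m) ⊕ (Fin m2 ⊕ Fin m2)) := by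
        rcases Nat.lt_or_ge 0 m with hm' | hm'
        · exact ⟨Sum.inl (Sum.inl ⟨0, hm'⟩)⟩
        · exact ⟨Sum.inr (Sum.inl ⟨0, by omega⟩)⟩
      have hb := (basisOfLinearIndependentOfCardEqFinrank hone.linearIndependent hcard).span_eq
      rw [coe_basisOfLinearIndependentOfCardEqFinrank] at hb
      rw [hb]
  set b0 := OrthonormalBasis.mk hone hspan with hb0
  set σ : ((Fin m ⊕ Fin m) ⊕ (Fin m2 ⊕ Fin m2)) ≃ (Fin (m + m2) ⊕ Fin (m + m2)) :=
    (Equiv.sumSumSumComm (Fin m) (Fin m) (Fin m2) (Fin m2)).trans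
      (Equiv.sumCongr finSumFinEquiv finSumFinEquiv) with hσ
  refine ⟨b0.reindex σ, ?_⟩
  intro j
  rcases hsplit : finSumFinEquiv.symm j with i | i
  · have hj : finSumFinEquiv (Sum.inl i) = j := by rw [← hsplit]; simp
    have hjv : (j : ℕ) = (i : ℕ) := by rw [← hj]; simp
    have eb1 : b0.reindex σ (Sum.inl j) = (bp (Sum.inl i) : H) := by
      rw [OrthonormalBasis.reindex_apply]
      have hσs : σ.symm (Sum.inl j) = Sum.inl (Sum.inl i) := by
        simp [hσ, ← hj]
      rw [hσs, hb0, OrthonormalBasis.coe_mk]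
      simp [he]
    have eb2 : b0.reindex σ (Sum.inr j) = (bp (Sum.inr i) : H) := by
      rw [OrthonormalBasis.reindex_apply]
      have hσs : σ.symm (Sum.inr j) = Sum.inl (Sum.inr i) := by
        simp [hσ, ← hj]
      rw [hσs, hb0, OrthonormalBasis.coe_mk]
      simp [he]
    have r1 := congrArg Subtype.val (hbp i).1
    have r2 := congrArg Subtype.val (hbp i).2
    refine ⟨by rw [eb1, eb2]; exact r1, by rw [eb1, eb2]; exact r2, ?_, ?_⟩
    · intro _
      exact ⟨by rw [eb1]; exact (hmemp _).1 (bp (Sum.inl i)).2,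
             by rw [eb2]; exact (hmemp _).1 (bp (Sum.inr i)).2⟩
    · intro hle
      exfalso
      have := i.isLt
      omega
  · have hj : finSumFinEquiv (Sum.inr i) = j := by rw [← hsplit]; simp
    have hjv : (j : ℕ) = m + (i : ℕ) := by rw [← hj]; simp
    have eb1 : b0.reindex σ (Sum.inl j) = (bm (Sum.inl i) : H) := by
      rw [OrthonormalBasis.reindex_apply]
      have hσs : σ.symm (Sum.inl j) = Sum.inr (Sum.inl i) := by
        simp [hσ, ← hj]
      rw [hσs, hb0, OrthonormalBasis.coe_mk]
      simp [he]
    have eb2 : b0.reindex σ (Sum.inr j) = (bm (Sum.inr i) : H) := by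
      rw [OrthonormalBasis.reindex_apply]
      have hσs : σ.symm (Sum.inr j) = Sum.inr (Sum.inr i) := by
        simp [hσ, ← hj]
      rw [hσs, hb0, OrthonormalBasis.coe_mk]
      simp [he]
    have r1 := congrArg Subtype.val (hbm i).1
    have r2 := congrArg Subtype.val (hbm i).2
    refine ⟨by rw [eb1, eb2]; exact r1, by rw [eb1, eb2]; exact r2, ?_, ?_⟩
    · intro hlt
      exfalso
      omega
    · intro _
      exact ⟨by rw [eb1]; exact (hmemm _).1 (bm (Sum.inl i)).2,
             by rw [eb2]; exact (hmemm _).1 (bm (Sum.inr i)).2⟩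
end

section
/- Suppose 𝒯 is antiunitary with 𝒯∘𝒯 = -I, Π is unitary with Π² = I, and 𝒯∘Π = -Π∘𝒯, on a finite-dimensional complex Hilbert space. Then there is an orthonormal basis consisting of pairs φⱼ, ψⱼ with 𝒯(φⱼ) = -ψⱼ, 𝒯(ψⱼ) = φⱼ, Πφⱼ = φⱼ, and Πψⱼ = -ψⱼ. -/
local notation "⟪" x ", " y "⟫" => @inner ℂ _ _ x y

theorem stmt_18 {H : Type*} [NormedAddCommGroup H] [InnerProductSpace ℂ H]
    [FiniteDimensional ℂ H] (T : H → H)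
    (hadd : ∀ v w, T (v + w) = T v + T w)
    (hsmul : ∀ (c : ℂ) v, T (c • v) = (starRingEnd ℂ c) • T v)
    (hsurj : Function.Surjective T)
    (hinner : ∀ v w, ⟪T v, T w⟫ = starRingEnd ℂ ⟪v, w⟫)
    (hsq : ∀ v, T (T v) = -v)
    (P : H ≃ₗᵢ[ℂ] H) (hP2 : ∀ v, P (P v) = v)
    (hanti : ∀ v, T (P v) = -P (T v)) :
    ∃ k : ℕ, Module.finrank ℂ H = 2 * k ∧
      ∃ b : OrthonormalBasis (Fin k ⊕ Fin k) ℂ H,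
        ∀ j : Fin k,
          T (b (Sum.inl j)) = -(b (Sum.inr j)) ∧
          T (b (Sum.inr j)) = b (Sum.inl j) ∧
          P (b (Sum.inl j)) = b (Sum.inl j) ∧
          P (b (Sum.inr j)) = -(b (Sum.inr j)) := by
  have hT0 : T 0 = 0 := by simpa using hsmul 0 0
  have hTneg : ∀ v, T (-v) = -T v := by
    intro v; simpa using hsmul (-1) v
  -- orthogonality of eigenspaces
  have horth : ∀ u w : H, P u = u → P w = -w → ⟪u, w⟫ = 0 := by
    intro u w hu hw
    have h := P.inner_map_map u w
    rw [hu, hw, inner_neg_right] at h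
    have : (2:ℂ) * ⟪u, w⟫ = 0 := by ring_nf; linear_combination -h
    simpa using this
  -- the +1 eigenspace
  set Ep : Submodule ℂ H :=
    { carrier := {v | P v = v}
      add_mem' := by intro a b ha hb; simp only [Set.mem_setOf_eq] at *; rw [map_add, ha, hb]
      zero_mem' := by simp
      smul_mem' := by intro c a ha; simp only [Set.mem_setOf_eq] at *; rw [map_smul, ha] } with hEp
  have mem_Ep : ∀ v : H, v ∈ Ep ↔ P v = v := fun v => Iff.rfl
  set K := Module.finrank ℂ Ep with hK
  set φ := stdOrthonormalBasis ℂ Ep with hφ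
  set v : Fin K ⊕ Fin K → H := Sum.elim (fun j => (φ j : H)) (fun j => -T (φ j)) with hv
  have hφP : ∀ j, P ((φ j : H)) = (φ j : H) := fun j => (φ j).2
  have hTφP : ∀ j, P (T (φ j : H)) = -(T (φ j : H)) := by
    intro j
    have h := hanti (φ j : H)
    rw [hφP j] at h
    simpa using (congrArg Neg.neg h).symm
  -- orthonormality
  have honv : Orthonormal ℂ v := by
    rw [orthonormal_iff_ite]
    have hφon := φ.orthonormal
    rw [orthonormal_iff_ite] at hφon
    rintro (i | i) (j | j)
    · simpa [v, Submodule.coe_inner] using hφon i j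
    · simp only [v, Sum.elim_inl, Sum.elim_inr, inner_neg_right]
      rw [horth _ _ (hφP i) (by rw [hTφP j])]
      simp
    · simp only [v, Sum.elim_inl, Sum.elim_inr, inner_neg_left]
      rw [← inner_conj_symm, horth _ _ (hφP j) (by rw [hTφP i])]
      simp
    · simp only [v, Sum.elim_inr, inner_neg_neg]
      rw [hinner]
      have := hφon i j
      rw [Submodule.coe_inner] at this  -- maybe wrong direction
      rw [this]
      split <;> simp_all
  -- Ep as a span
  have hspanφ : Submodule.span ℂ (Set.range (fun j => (φ j : H))) = Ep := by
    have h1 : Submodule.span ℂ (Set.range φ) = (⊤ : Submodule ℂ Ep) := by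
      rw [← φ.coe_toBasis]; exact φ.toBasis.span_eq
    rw [show (Set.range fun j => (φ j : H)) = Ep.subtype '' Set.range φ by
          rw [← Set.range_comp]; rfl,
        ← Submodule.map_span, h1, Submodule.map_top, Submodule.range_subtype]
  -- span
  have hspan : ⊤ ≤ Submodule.span ℂ (Set.range v) := by
    have hEpLe : Ep ≤ Submodule.span ℂ (Set.range v) := by
      rw [← hspanφ]
      apply Submodule.span_mono
      rintro _ ⟨j, rfl⟩
      exact ⟨Sum.inl j, rfl⟩
    have hTspan : ∀ u : H, u ∈ Ep → T u ∈ Submodule.span ℂ (Set.range v) := by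
      intro u hu
      rw [← hspanφ] at hu
      induction hu using Submodule.span_induction with
      | mem x hx =>
        obtain ⟨j, rfl⟩ := hx
        have : T (φ j : H) = -(v (Sum.inr j)) := by simp [v]
        rw [this]
        exact neg_mem (Submodule.subset_span ⟨Sum.inr j, rfl⟩)
      | zero => rw [hT0]; exact zero_mem _
      | add x y _ _ hx hy => rw [hadd]; exact add_mem hx hy
      | smul c x _ hx => rw [hsmul]; exact Submodule.smul_mem _ _ hx
    intro x _
    have hx1 : ((1:ℂ)/2) • (x + P x) ∈ Ep := by
      rw [mem_Ep]
      rw [map_smul, map_add, hP2]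
      ring_nf
      rw [add_comm]
    have hx2 : P (((1:ℂ)/2) • (x - P x)) = -(((1:ℂ)/2) • (x - P x)) := by
      rw [map_smul, map_sub, hP2, ← smul_neg, neg_sub]
    -- second piece is -T(T of it), and T of it lands in Ep
    have hw : ((1:ℂ)/2) • (x - P x) ∈ Submodule.span ℂ (Set.range v) := by
      set w := ((1:ℂ)/2) • (x - P x) with hwdef
      have hTw : T w ∈ Ep := by
        rw [mem_Ep]
        have h := hanti w
        rw [hx2, hTneg] at h
        have := (congrArg Neg.neg h).symm
        simpa using this
      have := hTspan (T w) hTw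
      rw [hsq w] at this
      simpa using neg_mem this
    have : x = ((1:ℂ)/2) • (x + P x) + ((1:ℂ)/2) • (x - P x) := by
      rw [smul_add, smul_sub]
      module
    rw [this]
    exact add_mem (hEpLe hx1) hw
  set b : OrthonormalBasis (Fin K ⊕ Fin K) ℂ H := OrthonormalBasis.mk honv hspan with hb
  have hbv : ∀ i, b i = v i := fun i => by rw [hb, OrthonormalBasis.coe_mk]
  refine ⟨K, ?_, b, ?_⟩
  · rw [Module.finrank_eq_card_basis b.toBasis]
    simp [two_mul]
  · intro j
    refine ⟨?_, ?_, ?_, ?_⟩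
    · rw [hbv, hbv]; simp [v]
    · rw [hbv, hbv]; simp only [v, Sum.elim_inr, Sum.elim_inl]
      rw [hTneg, hsq, neg_neg]
    · rw [hbv]; exact hφP j
    · rw [hbv]; simp only [v, Sum.elim_inr]
      rw [map_neg, hTφP, neg_neg]
end
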